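/- Let 𝒳 be a finite set and P a probability mass function on 𝒳 with P(x) > 0 for all x ∈ 𝒳. Let X_1, X_2, … be i.i.d. with law P and let Q_n denote the empirical distribution of the first n samples. Then for every a with 0 < a < 1, lim_{n→∞} (1/n) · log Pr( d_TV(Q_n, P) > a ) = − inf { D(Q‖P) : Q a probability mass function on 𝒳 with d_TV(Q, P) > a }, provided the set {Q : d_TV(Q,P) > a} is nonempty. -/

import Mathlib

open MeasureTheory ProbabilityTheory Filter Finset

/-- Kullback–Leibler divergence between two pmfs on a finite set. -/
noncomputable def klDivergence {𝒳 : Type*} [Fintype 𝒳] (Q P : 𝒳 → ℝ) : ℝ :=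
  ∑ x, if 0 < Q x then Q x * Real.log (Q x / P x) else 0

/-- Total variation distance between two pmfs on a finite set. -/
noncomputable def tvDist {𝒳 : Type*} [Fintype 𝒳] (Q P : 𝒳 → ℝ) : ℝ :=
  (1 / 2) * ∑ x, |Q x - P x|

/-- The empirical distribution of the first `n` samples of `X`. -/
noncomputable def empiricalDist {Ω 𝒳 : Type*} [DecidableEq 𝒳] (X : ℕ → Ω → 𝒳)
    (n : ℕ) (ω : Ω) (x : 𝒳) : ℝ :=
  (1 / (n : ℝ)) * ∑ i ∈ Finset.range n, if X i ω = x then (1 : ℝ) else 0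

set_option linter.unusedSectionVars false

section SanovAux



variable {𝒳 : Type*} [Fintype 𝒳] [DecidableEq 𝒳]

/-- number of coordinates of `v` equal to `x` -/
def sanovCnt (n : ℕ) (v : Fin n → 𝒳) (x : 𝒳) : ℕ :=
  (Finset.univ.filter (fun i => v i = x)).card

lemma sanovCnt_sum (n : ℕ) (v : Fin n → 𝒳) : ∑ x, sanovCnt n v x = n := by
  classical
  have := Finset.card_eq_sum_card_fiberwise (f := v) (s := Finset.univ) (t := Finset.univ)
    (fun x _ => Finset.mem_univ _)
  simpa [sanovCnt, Finset.card_univ] using this.symm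

lemma sanovCnt_le (n : ℕ) (v : Fin n → 𝒳) (x : 𝒳) : sanovCnt n v x ≤ n := by
  simpa [sanovCnt] using Finset.card_filter_le Finset.univ (fun i => v i = x)

lemma sanovCnt_eq_zero {n : ℕ} {v : Fin n → 𝒳} {x : 𝒳} (h : ∀ i, v i ≠ x) :
    sanovCnt n v x = 0 := by
  simp [sanovCnt, Finset.filter_eq_empty_iff.2 (fun i _ => h i)]

lemma sanovCnt_pos_elim {n : ℕ} {v : Fin n → 𝒳} {x : 𝒳} (h : sanovCnt n v x ≠ 0) :
    ∃ i, v i = x := by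
  by_contra hc
  push_neg at hc
  exact h (sanovCnt_eq_zero hc)

lemma prod_apply_eq_prod_pow (n : ℕ) (v : Fin n → 𝒳) (g : 𝒳 → ℝ) :
    ∏ i, g (v i) = ∏ x, g x ^ sanovCnt n v x := by
  classical
  rw [Finset.prod_comp g v]
  refine Finset.prod_subset (Finset.subset_univ _) ?_
  intro x _ hx
  have : sanovCnt n v x = 0 := by
    refine sanovCnt_eq_zero (fun i hi => hx ?_)
    rw [← hi]
    exact Finset.mem_image_of_mem v (Finset.mem_univ i)
  rw [show (Finset.univ.filter (fun i => v i = x)).card = sanovCnt n v x from rfl, this, pow_zero]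

lemma sum_prod_apply (n : ℕ) (h : Fin n → 𝒳 → ℝ) :
    ∑ v : Fin n → 𝒳, ∏ i, h i (v i) = ∏ i, ∑ x, h i x := by
  rw [Finset.prod_univ_sum (fun _ => (Finset.univ : Finset 𝒳)) h]
  rw [Fintype.piFinset_univ]

lemma sum_prod_const (n : ℕ) (g : 𝒳 → ℝ) :
    ∑ v : Fin n → 𝒳, ∏ i, g (v i) = (∑ x, g x) ^ n := by
  rw [sum_prod_apply]
  simp [Finset.prod_const, Finset.card_univ]
variable {𝒳 : Type*} [Fintype 𝒳] [DecidableEq 𝒳]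

lemma sum_prod_apply' (n : ℕ) (h : Fin n → 𝒳 → ℝ) :
    ∑ v : Fin n → 𝒳, ∏ i, h i (v i) = ∏ i, ∑ x, h i x := by
  rw [Finset.prod_univ_sum (fun _ => (Finset.univ : Finset 𝒳)) h, Fintype.piFinset_univ]

/-- second moment identity for iid sums, in finite-sum form -/
lemma sanov_cheb (n : ℕ) (Q f : 𝒳 → ℝ) (hQ1 : ∑ x, Q x = 1) (hf : ∑ x, Q x * f x = 0) :
    ∑ v : Fin n → 𝒳, (∏ i, Q (v i)) * (∑ i, f (v i)) ^ 2
      = n * ∑ x, Q x * f x ^ 2 := by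
  classical
  have h1 : ∀ (i : Fin n) (v : Fin n → 𝒳), ∏ k, (if k = i then f (v k) else 1) = f (v i) := by
    intro i v
    rw [Finset.prod_ite_eq' Finset.univ i (fun k => f (v k))]
    simp
  have key : ∀ v : Fin n → 𝒳, (∏ i, Q (v i)) * (∑ i, f (v i)) ^ 2
      = ∑ i, ∑ j, ∏ k, (Q (v k) * ((if k = i then f (v k) else 1) * (if k = j then f (v k) else 1))) := by
    intro v
    have hterm : ∀ i j : Fin n,
        ∏ k, (Q (v k) * ((if k = i then f (v k) else 1) * (if k = j then f (v k) else 1)))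
          = (∏ k, Q (v k)) * (f (v i) * f (v j)) := by
      intro i j
      rw [Finset.prod_mul_distrib, Finset.prod_mul_distrib, h1 i v, h1 j v]
    simp only [hterm]
    rw [sq, Finset.sum_mul_sum]
    rw [Finset.mul_sum]
    refine Finset.sum_congr rfl (fun i _ => ?_)
    rw [Finset.mul_sum]
  simp only [key]
  rw [Finset.sum_comm]
  have inner : ∀ i : Fin n, ∑ v : Fin n → 𝒳, ∑ j, ∏ k,
      (Q (v k) * ((if k = i then f (v k) else 1) * (if k = j then f (v k) else 1)))
      = ∑ j, ∑ v : Fin n → 𝒳, ∏ k,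
      (Q (v k) * ((if k = i then f (v k) else 1) * (if k = j then f (v k) else 1))) :=
    fun i => Finset.sum_comm
  simp only [inner]
  have eval : ∀ i j : Fin n, (∑ v : Fin n → 𝒳, ∏ k,
      (Q (v k) * ((if k = i then f (v k) else 1) * (if k = j then f (v k) else 1))))
      = if i = j then ∑ x, Q x * f x ^ 2 else 0 := by
    intro i j
    rw [sum_prod_apply' n (fun k y => Q y * ((if k = i then f y else 1) * (if k = j then f y else 1)))]
    by_cases hij : i = j
    · subst hij
      rw [if_pos rfl]
      rw [Finset.prod_eq_single i (fun k _ hk => by simp [hk, hQ1]) (by simp)]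
      simp [sq, mul_assoc]
    · rw [if_neg hij]
      refine Finset.prod_eq_zero (Finset.mem_univ i) ?_
      simp only [if_pos rfl, if_neg hij]
      simpa using hf
  simp only [eval]
  simp [Finset.sum_ite_eq, Finset.card_univ, mul_comm]



lemma prod_pow_eq_exp (t : 𝒳 → ℝ) (m : 𝒳 → ℕ) (h : ∀ x, m x ≠ 0 → 0 < t x) :
    ∏ x, t x ^ m x = Real.exp (∑ x, (m x : ℝ) * Real.log (t x)) := by
  rw [Real.exp_sum]
  refine Finset.prod_congr rfl (fun x _ => ?_)
  rcases Nat.eq_zero_or_pos (m x) with h0 | h0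
  · simp [h0]
  · rw [Real.exp_nat_mul, Real.exp_log (h x h0.ne')]

lemma gibbs (P Q : 𝒳 → ℝ) (hPpos : ∀ x, 0 < P x) (hPsum : ∑ x, P x = 1)
    (hQ0 : ∀ x, 0 ≤ Q x) (hQ1 : ∑ x, Q x = 1) : 0 ≤ klDivergence Q P := by
  have h1 : ∀ x : 𝒳, (if 0 < Q x then Q x - P x else 0)
      ≤ (if 0 < Q x then Q x * Real.log (Q x / P x) else 0) := by
    intro x
    split_ifs with h
    · have hlog : Real.log (P x / Q x) ≤ P x / Q x - 1 :=
        Real.log_le_sub_one_of_pos (div_pos (hPpos x) h)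
      have : Real.log (Q x / P x) = - Real.log (P x / Q x) := by
        rw [← Real.log_inv]
        congr 1
        field_simp
      rw [this]
      have h2 : Q x * (P x / Q x - 1) = P x - Q x := by field_simp
      nlinarith [mul_le_mul_of_nonneg_left hlog (le_of_lt h)]
    · exact le_refl _
  have h2 : (0:ℝ) ≤ ∑ x, (if 0 < Q x then Q x - P x else 0) := by
    have e1 : ∑ x, (if 0 < Q x then Q x - P x else 0)
        = (∑ x, if 0 < Q x then Q x else 0) - ∑ x, (if 0 < Q x then P x else 0) := by
      rw [← Finset.sum_sub_distrib]
      refine Finset.sum_congr rfl (fun x _ => ?_)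
      split_ifs <;> simp
    have e2 : (∑ x, if 0 < Q x then Q x else 0) = 1 := by
      rw [← hQ1]
      refine Finset.sum_congr rfl (fun x _ => ?_)
      split_ifs with h
      · rfl
      · exact (le_antisymm (not_lt.mp h) (hQ0 x)).symm
    have e3 : (∑ x, if 0 < Q x then P x else 0) ≤ 1 := by
      rw [← hPsum]
      refine Finset.sum_le_sum (fun x _ => ?_)
      split_ifs
      · exact le_refl _
      · exact (hPpos x).le
    linarith
  refine le_trans h2 ?_
  rw [klDivergence]
  exact Finset.sum_le_sum (fun x _ => h1 x)

lemma wgt_eq (P : 𝒳 → ℝ) (hPpos : ∀ x, 0 < P x) {n : ℕ} (hn : 0 < n) (c : 𝒳 → ℕ) :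
    ∏ x, P x ^ c x
      = (∏ x, ((c x : ℝ)/n) ^ c x)
        * Real.exp (-((n:ℝ) * klDivergence (fun x => (c x : ℝ)/n) P)) := by
  have hnR : (0:ℝ) < n := by exact_mod_cast hn
  rw [prod_pow_eq_exp P c (fun x _ => hPpos x)]
  rw [prod_pow_eq_exp (fun x => (c x : ℝ)/n) c
    (fun x hx => by positivity)]
  rw [← Real.exp_add]
  congr 1
  have hKL : (n:ℝ) * klDivergence (fun x => (c x : ℝ)/n) P
      = ∑ x, ((c x : ℝ) * Real.log ((c x : ℝ)/n) - (c x : ℝ) * Real.log (P x)) := by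
    rw [klDivergence, Finset.mul_sum]
    refine Finset.sum_congr rfl (fun x _ => ?_)
    rcases Nat.eq_zero_or_pos (c x) with h0 | h0
    · simp [h0]
    · have hc : (0:ℝ) < (c x : ℝ)/n := by positivity
      rw [if_pos hc]
      rw [Real.log_div hc.ne' (hPpos x).ne']
      field_simp
  rw [hKL, Finset.sum_sub_distrib]
  ring
lemma sanov_upper (P : 𝒳 → ℝ) (hPpos : ∀ x, 0 < P x) (a I : ℝ)
    (hI : ∀ Q : 𝒳 → ℝ, (∀ x, 0 ≤ Q x) → (∑ x, Q x = 1) → a < tvDist Q P →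
      I ≤ klDivergence Q P)
    {n : ℕ} (hn : 0 < n) (S : Finset (Fin n → 𝒳))
    (hS : ∀ v ∈ S, a < tvDist (fun x => (sanovCnt n v x : ℝ)/n) P) :
    ∑ v ∈ S, ∏ i, P (v i)
      ≤ ((n:ℝ)+1) ^ (Fintype.card 𝒳) * Real.exp (-((n:ℝ) * I)) := by
  classical
  rw [← Finset.sum_fiberwise_of_maps_to
    (fun v hv => Finset.mem_image_of_mem (sanovCnt n) hv) (fun v => ∏ i, P (v i))]
  have inner_le : ∀ c ∈ S.image (sanovCnt n),
      (∑ v ∈ S.filter (fun v => sanovCnt n v = c), ∏ i, P (v i))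
        ≤ Real.exp (-((n:ℝ) * I)) := by
    intro c hc
    obtain ⟨v0, hv0S, hv0⟩ := Finset.mem_image.mp hc
    have hcsum : ∑ x, c x = n := by rw [← hv0]; exact sanovCnt_sum n v0
    set Qc : 𝒳 → ℝ := fun x => (c x : ℝ)/n with hQc
    have hnR : (0:ℝ) < n := by exact_mod_cast hn
    have hQc0 : ∀ x, 0 ≤ Qc x := fun x => by positivity
    have hQc1 : ∑ x, Qc x = 1 := by
      rw [hQc, ← Finset.sum_div]
      have hcast : (∑ x, (c x : ℝ)) = (n:ℝ) := by exact_mod_cast hcsum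
      rw [hcast]
      field_simp
    have htv : a < tvDist Qc P := by
      have h := hS v0 hv0S
      have : (fun x => (sanovCnt n v0 x : ℝ)/n) = Qc := by
        funext x; rw [hv0]
      rwa [this] at h
    have hIle : I ≤ klDivergence Qc P := hI Qc hQc0 hQc1 htv
    have hterm : ∀ v ∈ S.filter (fun v => sanovCnt n v = c),
        (∏ i, P (v i)) = ∏ x, P x ^ c x := by
      intro v hv
      obtain ⟨-, hvc⟩ := Finset.mem_filter.mp hv
      rw [prod_apply_eq_prod_pow n v P, hvc]
    rw [Finset.sum_congr rfl hterm, Finset.sum_const, nsmul_eq_mul]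
    rw [wgt_eq P hPpos hn c]
    have hcard : ((S.filter (fun v => sanovCnt n v = c)).card : ℝ)
        * (∏ x, Qc x ^ c x) ≤ 1 := by
      have e : ((S.filter (fun v => sanovCnt n v = c)).card : ℝ) * (∏ x, Qc x ^ c x)
          = ∑ v ∈ S.filter (fun v => sanovCnt n v = c), ∏ i, Qc (v i) := by
        rw [Finset.sum_congr rfl (fun v hv => by
          obtain ⟨-, hvc⟩ := Finset.mem_filter.mp hv
          rw [prod_apply_eq_prod_pow n v Qc, hvc]), Finset.sum_const, nsmul_eq_mul]
      rw [e]
      have step : ∑ v ∈ S.filter (fun v => sanovCnt n v = c), ∏ i, Qc (v i)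
          ≤ ∑ v : Fin n → 𝒳, ∏ i, Qc (v i) :=
        Finset.sum_le_sum_of_subset_of_nonneg (Finset.subset_univ _)
          (fun v _ _ => Finset.prod_nonneg (fun i _ => hQc0 _))
      calc ∑ v ∈ S.filter (fun v => sanovCnt n v = c), ∏ i, Qc (v i)
          ≤ ∑ v : Fin n → 𝒳, ∏ i, Qc (v i) := step
        _ = 1 := by rw [sum_prod_const, hQc1, one_pow]
    have hwnn : (0:ℝ) ≤ ∏ x, Qc x ^ c x :=
      Finset.prod_nonneg (fun x _ => pow_nonneg (hQc0 x) _)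
    calc ((S.filter (fun v => sanovCnt n v = c)).card : ℝ)
          * ((∏ x, Qc x ^ c x) * Real.exp (-((n:ℝ) * klDivergence Qc P)))
        = (((S.filter (fun v => sanovCnt n v = c)).card : ℝ) * ∏ x, Qc x ^ c x)
          * Real.exp (-((n:ℝ) * klDivergence Qc P)) := by ring
      _ ≤ 1 * Real.exp (-((n:ℝ) * klDivergence Qc P)) :=
          mul_le_mul_of_nonneg_right hcard (Real.exp_nonneg _)
      _ = Real.exp (-((n:ℝ) * klDivergence Qc P)) := one_mul _
      _ ≤ Real.exp (-((n:ℝ) * I)) := by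
          apply Real.exp_le_exp.mpr
          have := mul_le_mul_of_nonneg_left hIle hnR.le
          linarith
  have hcard_im : ((S.image (sanovCnt n)).card : ℝ)
      ≤ ((n:ℝ)+1) ^ (Fintype.card 𝒳) := by
    have h1 : (S.image (sanovCnt n)).card ≤ Fintype.card (𝒳 → Fin (n+1)) := by
      rw [← Finset.card_univ]
      apply Finset.card_le_card_of_injOn
        (fun c x => (⟨min (c x) n, Nat.lt_succ_of_le (min_le_right _ _)⟩ : Fin (n+1)))
        (fun c _ => Finset.mem_univ _)
      intro c hc c' hc' h
      simp only [Finset.coe_image, Set.mem_image] at hc hc'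
      obtain ⟨v, -, hv⟩ := hc
      obtain ⟨v', -, hv'⟩ := hc'
      funext x
      have hle : c x ≤ n := by rw [← hv]; exact sanovCnt_le n v x
      have hle' : c' x ≤ n := by rw [← hv']; exact sanovCnt_le n v' x
      have hx := congrFun h x
      have : min (c x) n = min (c' x) n := by
        exact congrArg Fin.val hx
      rwa [min_eq_left hle, min_eq_left hle'] at this
    have h2 : Fintype.card (𝒳 → Fin (n+1)) = (n+1) ^ (Fintype.card 𝒳) := by
      simp [Fintype.card_fun]
    calc ((S.image (sanovCnt n)).card : ℝ) ≤ ((n+1) ^ (Fintype.card 𝒳) : ℕ) := by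
          exact_mod_cast h2 ▸ h1
      _ = ((n:ℝ)+1) ^ (Fintype.card 𝒳) := by push_cast; ring
  calc ∑ c ∈ S.image (sanovCnt n), ∑ v ∈ S.filter (fun v => sanovCnt n v = c), ∏ i, P (v i)
      ≤ ∑ _c ∈ S.image (sanovCnt n), Real.exp (-((n:ℝ) * I)) :=
        Finset.sum_le_sum inner_le
    _ = ((S.image (sanovCnt n)).card : ℝ) * Real.exp (-((n:ℝ) * I)) := by
        rw [Finset.sum_const, nsmul_eq_mul]
    _ ≤ ((n:ℝ)+1) ^ (Fintype.card 𝒳) * Real.exp (-((n:ℝ) * I)) :=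
        mul_le_mul_of_nonneg_right hcard_im (Real.exp_nonneg _)

set_option maxHeartbeats 2000000 in
lemma sanov_lower (P : 𝒳 → ℝ) (hPpos : ∀ x, 0 < P x)
    (a : ℝ) (Q : 𝒳 → ℝ) (hQ0 : ∀ x, 0 ≤ Q x) (hQ1 : ∑ x, Q x = 1) (htv : a < tvDist Q P)
    (ε : ℝ) (hε : 0 < ε) :
    ∃ N : ℕ, 0 < N ∧ ∀ n, N ≤ n → ∀ S : Finset (Fin n → 𝒳),
      (∀ v : Fin n → 𝒳, a < tvDist (fun x => (sanovCnt n v x : ℝ)/n) P → v ∈ S) →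
      Real.exp ((n:ℝ) * (-(klDivergence Q P) - ε)) ≤ ∑ v ∈ S, ∏ i, P (v i) := by
  classical
  set D := klDivergence Q P with hD
  set k := Fintype.card 𝒳 with hk
  have hXne : Nonempty 𝒳 := by
    by_contra h
    rw [not_nonempty_iff] at h
    rw [Finset.univ_eq_empty, Finset.sum_empty] at hQ1
    norm_num at hQ1
  have hkpos : 0 < k := Fintype.card_pos_iff.mpr hXne
  set L : ℝ := ∑ x, |Real.log (Q x / P x)| with hL
  have hL0 : 0 ≤ L := Finset.sum_nonneg (fun x _ => abs_nonneg _)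
  set δ : ℝ := min (ε/(2*(L+1))) ((tvDist Q P - a)/k) with hδdef
  have hδ : 0 < δ := by
    apply lt_min
    · positivity
    · apply div_pos (by linarith) (by exact_mod_cast hkpos)
  have hδL : δ * L ≤ ε/2 := by
    have h1 : δ ≤ ε/(2*(L+1)) := min_le_left _ _
    have h2 : δ * L ≤ ε/(2*(L+1)) * L := mul_le_mul_of_nonneg_right h1 hL0
    have h3 : ε/(2*(L+1)) * L ≤ ε/2 := by
      rw [div_mul_eq_mul_div, div_le_div_iff₀ (by positivity) (by norm_num)]
      nlinarith
    linarith
  have hδk : (k:ℝ) * δ ≤ tvDist Q P - a := by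
    have h1 : δ ≤ (tvDist Q P - a)/k := min_le_right _ _
    rw [mul_comm]
    exact (le_div_iff₀ (by exact_mod_cast hkpos)).mp h1
  -- choice of N
  set N : ℕ := max 1 (max ⌈2*(k:ℝ)/δ^2⌉₊ ⌈2*Real.log 2/ε⌉₊) with hN
  refine ⟨N, lt_of_lt_of_le one_pos (le_max_left _ _), ?_⟩
  intro n hn S hSin
  have hn1 : 1 ≤ n := le_trans (le_max_left _ _) hn
  have hnpos : (0:ℝ) < n := by exact_mod_cast hn1
  have hnc1 : 2*(k:ℝ)/δ^2 ≤ n := by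
    have h1 : ⌈2*(k:ℝ)/δ^2⌉₊ ≤ n := le_trans (le_max_left _ _) (le_trans (le_max_right 1 _) hn)
    exact Nat.ceil_le.mp h1
  have hnc2 : 2*Real.log 2/ε ≤ n := by
    have h1 : ⌈2*Real.log 2/ε⌉₊ ≤ n := le_trans (le_max_right _ _) (le_trans (le_max_right 1 _) hn)
    exact Nat.ceil_le.mp h1
  -- the good set B
  set B : Finset (Fin n → 𝒳) := Finset.univ.filter
    (fun v : Fin n → 𝒳 => (∀ i, 0 < Q (v i)) ∧ ∀ x, |(sanovCnt n v x : ℝ)/n - Q x| < δ)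
    with hB
  have hBmem : ∀ v ∈ B, (∀ i, 0 < Q (v i)) ∧ ∀ x, |(sanovCnt n v x : ℝ)/n - Q x| < δ :=
    fun v hv => (Finset.mem_filter.mp hv).2
  -- B ⊆ S
  have hBS : B ⊆ S := by
    intro v hv
    obtain ⟨-, hδv⟩ := hBmem v hv
    apply hSin
    have htri : tvDist Q P - tvDist (fun x => (sanovCnt n v x : ℝ)/n) P
        ≤ (1/2) * ∑ x, |Q x - (sanovCnt n v x : ℝ)/n| := by
      rw [tvDist, tvDist]
      rw [← mul_sub, ← Finset.sum_sub_distrib]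
      apply mul_le_mul_of_nonneg_left _ (by norm_num)
      apply Finset.sum_le_sum
      intro x _
      have := abs_sub_abs_le_abs_sub (Q x - P x) ((sanovCnt n v x : ℝ)/n - P x)
      have h2 : Q x - P x - ((sanovCnt n v x : ℝ)/n - P x) = Q x - (sanovCnt n v x : ℝ)/n := by ring
      rw [h2] at this
      exact this
    have hsum : ∑ x, |Q x - (sanovCnt n v x : ℝ)/n| < k * δ := by
      have : ∀ x ∈ Finset.univ, |Q x - (sanovCnt n v x : ℝ)/n| < δ := by
        intro x _
        rw [abs_sub_comm]
        exact hδv x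
      calc ∑ x, |Q x - (sanovCnt n v x : ℝ)/n| < ∑ _x : 𝒳, δ :=
            Finset.sum_lt_sum_of_nonempty Finset.univ_nonempty this
        _ = k * δ := by rw [Finset.sum_const, nsmul_eq_mul, Finset.card_univ]
    nlinarith [htri, hsum, hδk]
  -- pointwise lower bound on B
  have hpt : ∀ v ∈ B, (∏ i, Q (v i)) * Real.exp (-((n:ℝ) * (D + ε/2))) ≤ ∏ i, P (v i) := by
    intro v hv
    obtain ⟨hQv, hδv⟩ := hBmem v hv
    have hsplit : ∏ i, P (v i) = (∏ i, Q (v i)) * ∏ i, (P (v i)/Q (v i)) := by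
      rw [← Finset.prod_mul_distrib]
      exact Finset.prod_congr rfl (fun i _ => (mul_div_cancel₀ (P (v i)) (hQv i).ne').symm)
    have hQcnt : ∀ x, sanovCnt n v x ≠ 0 → 0 < Q x := by
      intro x hx
      obtain ⟨i, hi⟩ := sanovCnt_pos_elim hx
      rw [← hi]; exact hQv i
    have hratio : ∏ i, (P (v i)/Q (v i))
        = Real.exp (∑ x, (sanovCnt n v x : ℝ) * Real.log (P x / Q x)) := by
      rw [prod_apply_eq_prod_pow n v (fun x => P x / Q x)]
      exact prod_pow_eq_exp _ _ (fun x hx => div_pos (hPpos x) (hQcnt x hx))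
    have hbound : -((n:ℝ) * (D + ε/2)) ≤ ∑ x, (sanovCnt n v x : ℝ) * Real.log (P x / Q x) := by
      have e1 : ∑ x, (sanovCnt n v x : ℝ) * Real.log (P x / Q x)
          = -∑ x, (sanovCnt n v x : ℝ) * Real.log (Q x / P x) := by
        rw [← Finset.sum_neg_distrib]
        refine Finset.sum_congr rfl (fun x _ => ?_)
        rcases Nat.eq_zero_or_pos (sanovCnt n v x) with h0 | h0
        · simp [h0]
        · have hQx : 0 < Q x := hQcnt x h0.ne'
          have hflip : Real.log (P x / Q x) = - Real.log (Q x / P x) := by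
            rw [← Real.log_inv, inv_div]
          rw [hflip]
          ring
      rw [e1, neg_le_neg_iff]
      -- ∑ cnt * log(Q/P) ≤ n (D + ε/2)
      have e2 : ∀ x, (sanovCnt n v x : ℝ) * Real.log (Q x / P x)
          ≤ (n:ℝ) * Q x * Real.log (Q x / P x) + (n:ℝ) * δ * |Real.log (Q x / P x)| := by
        intro x
        have habs : |(sanovCnt n v x : ℝ) - n * Q x| ≤ n * δ := by
          have := hδv x
          have h2 : |(sanovCnt n v x : ℝ) - n * Q x| = n * |(sanovCnt n v x : ℝ)/n - Q x| := by
            rw [← abs_of_pos hnpos, ← abs_mul]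
            congr 1
            field_simp
            rw [abs_of_pos hnpos]; ring
          rw [h2]
          exact mul_le_mul_of_nonneg_left (hδv x).le hnpos.le
        have h3 : ((sanovCnt n v x : ℝ) - n * Q x) * Real.log (Q x / P x)
            ≤ n * δ * |Real.log (Q x / P x)| := by
          calc ((sanovCnt n v x : ℝ) - n * Q x) * Real.log (Q x / P x)
              ≤ |((sanovCnt n v x : ℝ) - n * Q x) * Real.log (Q x / P x)| := le_abs_self _
            _ = |(sanovCnt n v x : ℝ) - n * Q x| * |Real.log (Q x / P x)| := abs_mul _ _
            _ ≤ n * δ * |Real.log (Q x / P x)| :=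
                mul_le_mul_of_nonneg_right habs (abs_nonneg _)
        nlinarith [h3]
      have e3 : ∑ x, ((n:ℝ) * Q x * Real.log (Q x / P x) + (n:ℝ) * δ * |Real.log (Q x / P x)|)
          = (n:ℝ) * D + (n:ℝ) * δ * L := by
        rw [Finset.sum_add_distrib]
        congr 1
        · rw [hD, klDivergence, Finset.mul_sum]
          refine Finset.sum_congr rfl (fun x _ => ?_)
          split_ifs with h
          · ring
          · have : Q x = 0 := le_antisymm (not_lt.mp h) (hQ0 x)
            simp [this]
        · rw [hL, Finset.mul_sum]
      calc ∑ x, (sanovCnt n v x : ℝ) * Real.log (Q x / P x)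
          ≤ ∑ x, ((n:ℝ) * Q x * Real.log (Q x / P x) + (n:ℝ) * δ * |Real.log (Q x / P x)|) :=
            Finset.sum_le_sum (fun x _ => e2 x)
        _ = (n:ℝ) * D + (n:ℝ) * δ * L := e3
        _ ≤ (n:ℝ) * (D + ε/2) := by nlinarith [hδL, hnpos.le]
    rw [hsplit, hratio]
    apply mul_le_mul_of_nonneg_left _ (Finset.prod_nonneg (fun i _ => (hQ0 _)))
    exact Real.exp_le_exp.mpr hbound
  -- mass of B under Q
  have hmass : 1 - (k:ℝ)/((n:ℝ)*δ^2) ≤ ∑ v ∈ B, ∏ i, Q (v i) := by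
    have htotal : ∑ v : Fin n → 𝒳, ∏ i, Q (v i) = 1 := by
      rw [sum_prod_const, hQ1, one_pow]
    have hsplit : ∑ v ∈ Finset.univ \ B, ∏ i, Q (v i) + ∑ v ∈ B, ∏ i, Q (v i) = 1 := by
      rw [Finset.sum_sdiff (Finset.subset_univ B)]
      exact htotal
    have hbad : ∑ v ∈ Finset.univ \ B, ∏ i, Q (v i) ≤ (k:ℝ)/((n:ℝ)*δ^2) := by
      have hvb : ∀ v ∈ Finset.univ \ B, ∏ i, Q (v i)
          ≤ (1/δ^2) * ((∏ i, Q (v i)) * ∑ x, ((sanovCnt n v x : ℝ)/n - Q x)^2) := by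
        intro v hv
        rw [Finset.mem_sdiff, hB, Finset.mem_filter] at hv
        have hnotB : ¬((∀ i, 0 < Q (v i)) ∧ ∀ x, |(sanovCnt n v x : ℝ)/n - Q x| < δ) :=
          fun h => hv.2 ⟨Finset.mem_univ v, h⟩
        by_cases hpos : ∀ i, 0 < Q (v i)
        · have hex : ∃ x, δ ≤ |(sanovCnt n v x : ℝ)/n - Q x| := by
            by_contra hc
            push_neg at hc
            exact hnotB ⟨hpos, fun x => hc x⟩
          obtain ⟨x0, hx0⟩ := hex
          have hsq : δ^2 ≤ ∑ x, ((sanovCnt n v x : ℝ)/n - Q x)^2 := by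
            calc δ^2 ≤ |(sanovCnt n v x0 : ℝ)/n - Q x0|^2 := pow_le_pow_left₀ hδ.le hx0 2
              _ = ((sanovCnt n v x0 : ℝ)/n - Q x0)^2 := sq_abs _
              _ ≤ ∑ x, ((sanovCnt n v x : ℝ)/n - Q x)^2 :=
                  Finset.single_le_sum (f := fun x => ((sanovCnt n v x : ℝ)/n - Q x)^2)
                    (fun x _ => sq_nonneg _) (Finset.mem_univ x0)
          have hQvnn : 0 ≤ ∏ i, Q (v i) := Finset.prod_nonneg (fun i _ => hQ0 _)
          calc ∏ i, Q (v i) = (1/δ^2) * ((∏ i, Q (v i)) * δ^2) := by field_simp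
            _ ≤ (1/δ^2) * ((∏ i, Q (v i)) * ∑ x, ((sanovCnt n v x : ℝ)/n - Q x)^2) := by
                apply mul_le_mul_of_nonneg_left _ (by positivity)
                exact mul_le_mul_of_nonneg_left hsq hQvnn
        · push_neg at hpos
          obtain ⟨i0, hi0⟩ := hpos
          have hq0 : Q (v i0) = 0 := le_antisymm hi0 (hQ0 _)
          have hzero : ∏ i, Q (v i) = 0 := Finset.prod_eq_zero (Finset.mem_univ i0) hq0
          rw [hzero, zero_mul, mul_zero]
      calc ∑ v ∈ Finset.univ \ B, ∏ i, Q (v i)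
          ≤ ∑ v ∈ Finset.univ \ B, (1/δ^2) * ((∏ i, Q (v i)) * ∑ x, ((sanovCnt n v x : ℝ)/n - Q x)^2) :=
            Finset.sum_le_sum hvb
        _ ≤ ∑ v : Fin n → 𝒳, (1/δ^2) * ((∏ i, Q (v i)) * ∑ x, ((sanovCnt n v x : ℝ)/n - Q x)^2) := by
            apply Finset.sum_le_sum_of_subset_of_nonneg (Finset.subset_univ _)
            intro v _ _
            have hQvnn : 0 ≤ ∏ i, Q (v i) := Finset.prod_nonneg (fun i _ => hQ0 _)
            exact mul_nonneg (by positivity)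
              (mul_nonneg hQvnn (Finset.sum_nonneg (fun x _ => sq_nonneg _)))
        _ = (1/δ^2) * ∑ x, ∑ v : Fin n → 𝒳, (∏ i, Q (v i)) * ((sanovCnt n v x : ℝ)/n - Q x)^2 := by
            rw [← Finset.mul_sum]
            congr 1
            rw [Finset.sum_comm]
            refine Finset.sum_congr rfl (fun v _ => ?_)
            rw [Finset.mul_sum]
        _ ≤ (1/δ^2) * ((k:ℝ) * (1/n)) := by
            apply mul_le_mul_of_nonneg_left _ (by positivity)
            have hx_bound : ∀ x : 𝒳, ∑ v : Fin n → 𝒳, (∏ i, Q (v i)) * ((sanovCnt n v x : ℝ)/n - Q x)^2 ≤ 1/n := by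
              intro x
              set f : 𝒳 → ℝ := fun y => (if y = x then (1:ℝ) else 0) - Q x with hf
              have hsumf : ∑ y, Q y * f y = 0 := by
                have e : ∀ y, Q y * f y = (if y = x then Q y else 0) - Q y * Q x := by
                  intro y; simp only [hf]; split_ifs <;> ring
                rw [Finset.sum_congr rfl (fun y _ => e y), Finset.sum_sub_distrib,
                  Finset.sum_ite_eq' Finset.univ x Q]
                simp only [Finset.mem_univ, if_true]
                rw [← Finset.sum_mul, hQ1, one_mul, sub_self]
              have hcnt_eq : ∀ v : Fin n → 𝒳, ((sanovCnt n v x : ℝ)/n - Q x)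
                  = (1/n) * ∑ i, f (v i) := by
                intro v
                rw [hf]
                have : ∑ i : Fin n, ((if v i = x then (1:ℝ) else 0) - Q x)
                    = (sanovCnt n v x : ℝ) - n * Q x := by
                  rw [Finset.sum_sub_distrib, Finset.sum_boole, Finset.sum_const, nsmul_eq_mul]
                  simp [sanovCnt, Finset.card_univ]
                rw [this]
                field_simp
              have hfsq : ∑ y, Q y * f y ^ 2 ≤ 1 := by
                have : ∀ y, Q y * f y ^ 2 ≤ Q y := by
                  intro y
                  have hQx1 : Q x ≤ 1 := by
                    rw [← hQ1]
                    exact Finset.single_le_sum (fun z _ => hQ0 z) (Finset.mem_univ x)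
                  have hfy : |f y| ≤ 1 := by
                    rw [hf]
                    simp only
                    split_ifs <;> rw [abs_le] <;> constructor <;> nlinarith [hQ0 x]
                  have : f y ^ 2 ≤ 1 := by
                    rw [← sq_abs]
                    nlinarith [abs_nonneg (f y)]
                  nlinarith [hQ0 y]
                calc ∑ y, Q y * f y ^ 2 ≤ ∑ y, Q y := Finset.sum_le_sum (fun y _ => this y)
                  _ = 1 := hQ1
              calc ∑ v : Fin n → 𝒳, (∏ i, Q (v i)) * ((sanovCnt n v x : ℝ)/n - Q x)^2
                  = ∑ v : Fin n → 𝒳, (1/(n:ℝ)^2) * ((∏ i, Q (v i)) * (∑ i, f (v i))^2) := by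
                    refine Finset.sum_congr rfl (fun v _ => ?_)
                    rw [hcnt_eq v]
                    ring
                _ = (1/(n:ℝ)^2) * ((n:ℝ) * ∑ y, Q y * f y ^ 2) := by
                    rw [← Finset.mul_sum, sanov_cheb n Q f hQ1 hsumf]
                _ ≤ (1/(n:ℝ)^2) * ((n:ℝ) * 1) := by
                    apply mul_le_mul_of_nonneg_left _ (by positivity)
                    exact mul_le_mul_of_nonneg_left hfsq hnpos.le
                _ = 1/n := by field_simp
            calc ∑ x : 𝒳, ∑ v : Fin n → 𝒳, (∏ i, Q (v i)) * ((sanovCnt n v x : ℝ)/n - Q x)^2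
                ≤ ∑ _x : 𝒳, (1:ℝ)/n := Finset.sum_le_sum (fun x _ => hx_bound x)
              _ = (k:ℝ) * (1/n) := by rw [Finset.sum_const, nsmul_eq_mul, Finset.card_univ]
        _ = (k:ℝ)/((n:ℝ)*δ^2) := by
            rw [one_div, one_div, div_eq_mul_inv, mul_inv]
            ring
    linarith
  -- half bound
  have hhalf : (1:ℝ)/2 ≤ ∑ v ∈ B, ∏ i, Q (v i) := by
    have h2k : 2*(k:ℝ) ≤ (n:ℝ)*δ^2 := by
      rw [div_le_iff₀ (by positivity : (0:ℝ) < δ^2)] at hnc1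
      nlinarith [hnc1]
    have : (k:ℝ)/((n:ℝ)*δ^2) ≤ 1/2 := by
      rw [div_le_div_iff₀ (by positivity) (by norm_num)]
      linarith
    linarith
  -- combine
  have hchain : Real.exp (-((n:ℝ) * (D + ε/2))) * (1/2) ≤ ∑ v ∈ S, ∏ i, P (v i) := by
    calc Real.exp (-((n:ℝ) * (D + ε/2))) * (1/2)
        ≤ Real.exp (-((n:ℝ) * (D + ε/2))) * ∑ v ∈ B, ∏ i, Q (v i) :=
          mul_le_mul_of_nonneg_left hhalf (Real.exp_nonneg _)
      _ = ∑ v ∈ B, (∏ i, Q (v i)) * Real.exp (-((n:ℝ) * (D + ε/2))) := by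
          rw [Finset.mul_sum]
          exact Finset.sum_congr rfl (fun v _ => mul_comm _ _)
      _ ≤ ∑ v ∈ B, ∏ i, P (v i) := Finset.sum_le_sum hpt
      _ ≤ ∑ v ∈ S, ∏ i, P (v i) :=
          Finset.sum_le_sum_of_subset_of_nonneg hBS
            (fun v _ _ => Finset.prod_nonneg (fun i _ => (hPpos _).le))
  refine le_trans ?_ hchain
  have h2 : (2:ℝ) ≤ Real.exp ((n:ℝ) * ε / 2) := by
    have hh := hnc2
    rw [div_le_iff₀ hε] at hh
    calc (2:ℝ) = Real.exp (Real.log 2) := (Real.exp_log (by norm_num)).symm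
      _ ≤ Real.exp ((n:ℝ) * ε / 2) := Real.exp_le_exp.mpr (by linarith)
  have key : Real.exp ((n:ℝ) * (-D - ε)) * 2 ≤ Real.exp (-((n:ℝ) * (D + ε/2))) := by
    calc Real.exp ((n:ℝ) * (-D - ε)) * 2
        ≤ Real.exp ((n:ℝ) * (-D - ε)) * Real.exp ((n:ℝ) * ε / 2) :=
          mul_le_mul_of_nonneg_left h2 (Real.exp_nonneg _)
      _ = Real.exp (-((n:ℝ) * (D + ε/2))) := by rw [← Real.exp_add]; congr 1; ring
  linarith [key]


end SanovAux

set_option maxHeartbeats 2000000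

/-- **Sanov's theorem for empirical distributions.**  For i.i.d. samples from an
everywhere-positive pmf `P` on a finite set, the probability that the empirical
distribution is farther than `a` from `P` in total variation decays exponentially,
with exponent the infimum of `D(Q‖P)` over all pmfs `Q` with `d_TV(Q, P) > a`. -/
theorem sanov_empirical {Ω : Type*} [MeasurableSpace Ω] (μ : Measure Ω)
    [IsProbabilityMeasure μ] {𝒳 : Type*} [Fintype 𝒳] [DecidableEq 𝒳]
    [m𝒳 : MeasurableSpace 𝒳] [MeasurableSingletonClass 𝒳]
    (P : 𝒳 → ℝ) (hPpos : ∀ x, 0 < P x) (hPsum : ∑ x, P x = 1)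
    (X : ℕ → Ω → 𝒳) (hmeas : ∀ i, Measurable (X i))
    (hindep : iIndepFun X μ)
    (hdist : ∀ i x, μ {ω | X i ω = x} = ENNReal.ofReal (P x))
    (a : ℝ) (ha0 : 0 < a) (ha1 : a < 1)
    (hne : ∃ Q : 𝒳 → ℝ, (∀ x, 0 ≤ Q x) ∧ (∑ x, Q x = 1) ∧ a < tvDist Q P) :
    Tendsto (fun n : ℕ => (1 / (n : ℝ)) *
        Real.log ((μ {ω | a < tvDist (empiricalDist X n ω) P}).toReal))
      atTop
      (nhds (-sInf {r : ℝ | ∃ Q : 𝒳 → ℝ,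
        (∀ x, 0 ≤ Q x) ∧ (∑ x, Q x = 1) ∧ a < tvDist Q P ∧ r = klDivergence Q P})) := by
  classical
  have hXne : Nonempty 𝒳 := by
    by_contra h
    rw [not_nonempty_iff] at h
    rw [Finset.univ_eq_empty, Finset.sum_empty] at hPsum
    norm_num at hPsum
  inhabit 𝒳
  set k := Fintype.card 𝒳 with hkdef
  have hk1 : 1 ≤ k := Fintype.card_pos_iff.mpr hXne
  set E : Set ℝ := {r : ℝ | ∃ Q : 𝒳 → ℝ,
    (∀ x, 0 ≤ Q x) ∧ (∑ x, Q x = 1) ∧ a < tvDist Q P ∧ r = klDivergence Q P} with hE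
  obtain ⟨Q0, hQ00, hQ01, hQ0tv⟩ := hne
  have hEne : E.Nonempty := ⟨klDivergence Q0 P, Q0, hQ00, hQ01, hQ0tv, rfl⟩
  have hEbdd : BddBelow E := by
    refine ⟨0, fun r hr => ?_⟩
    obtain ⟨Q, hq0, hq1, -, hr⟩ := hr
    rw [hr]
    exact gibbs P Q hPpos hPsum hq0 hq1
  set I := sInf E with hIdef
  have hIle : ∀ Q : 𝒳 → ℝ, (∀ x, 0 ≤ Q x) → (∑ x, Q x = 1) → a < tvDist Q P →
      I ≤ klDivergence Q P :=
    fun Q h0 h1 h2 => csInf_le hEbdd ⟨Q, h0, h1, h2, rfl⟩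
  -- the finite-sum representation
  set Sn : (n : ℕ) → Finset (Fin n → 𝒳) := fun n =>
    Finset.univ.filter (fun v => a < tvDist (fun x => (sanovCnt n v x : ℝ)/n) P) with hSndef
  set p : ℕ → ℝ := fun n => ∑ v ∈ Sn n, ∏ i, P (v i) with hpdef
  have hmeasure : ∀ n : ℕ, (μ {ω | a < tvDist (empiricalDist X n ω) P}).toReal = p n := by
    intro n
    set w : (Fin n → 𝒳) → ℕ → 𝒳 := fun v i => if h : i < n then v ⟨i, h⟩ else default with hw
    have hemp : ∀ ω : Ω, empiricalDist X n ω
        = fun x => (sanovCnt n (fun i : Fin n => X i ω) x : ℝ)/n := by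
      intro ω
      funext x
      rw [empiricalDist]
      rw [Finset.sum_range (fun i => if X i ω = x then (1:ℝ) else 0)]
      rw [Finset.sum_boole]
      rw [sanovCnt]
      rw [one_div_mul_eq_div]
    have hev : {ω | a < tvDist (empiricalDist X n ω) P}
        = ⋃ v ∈ Sn n, (⋂ i ∈ Finset.range n, X i ⁻¹' {w v i}) := by
      ext ω
      simp only [Set.mem_setOf_eq, Set.mem_iUnion, Set.mem_iInter, Set.mem_preimage,
        Set.mem_singleton_iff]
      constructor
      · intro hω
        refine ⟨fun i => X i ω, ?_, ?_⟩
        · rw [hSndef]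
          refine Finset.mem_filter.mpr ⟨Finset.mem_univ _, ?_⟩
          rw [hemp ω] at hω
          exact hω
        · intro i hi
          rw [Finset.mem_range] at hi
          rw [hw]
          simp only [hi, dif_pos]
      · rintro ⟨v, hvS, hvω⟩
        have hveq : (fun i : Fin n => X i ω) = v := by
          funext i
          have := hvω i (Finset.mem_range.mpr i.isLt)
          rw [hw] at this
          simpa [i.isLt] using this
        rw [hemp ω, hveq]
        rw [hSndef] at hvS
        exact (Finset.mem_filter.mp hvS).2
    rw [hev]
    rw [measure_biUnion_finset ?hdisj ?hmeas']
    case hdisj =>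
      intro v hv v' hv' hvv'
      refine Set.disjoint_left.mpr (fun ω h1 h2 => hvv' ?_)
      simp only [Set.mem_iInter, Set.mem_preimage, Set.mem_singleton_iff] at h1 h2
      funext i
      have e1 := h1 i (Finset.mem_range.mpr i.isLt)
      have e2 := h2 i (Finset.mem_range.mpr i.isLt)
      have ev : w v (i:ℕ) = v i := by rw [hw]; simp [i.isLt]
      have ev' : w v' (i:ℕ) = v' i := by rw [hw]; simp [i.isLt]
      rw [← ev, ← ev', ← e1, ← e2]
    case hmeas' =>
      intro v _
      exact MeasurableSet.biInter (Finset.range n).countable_toSet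
        (fun i _ => (hmeas i) (measurableSet_singleton _))
    have hAv : ∀ v : Fin n → 𝒳, μ (⋂ i ∈ Finset.range n, X i ⁻¹' {w v i})
        = ENNReal.ofReal (∏ i, P (v i)) := by
      intro v
      rw [hindep.meas_biInter (fun i _ => ⟨{w v i}, measurableSet_singleton _, rfl⟩)]
      have : ∀ i ∈ Finset.range n, μ (X i ⁻¹' {w v i}) = ENNReal.ofReal (P (w v i)) := by
        intro i _
        rw [← hdist i (w v i)]
        rfl
      rw [Finset.prod_congr rfl this]
      rw [← ENNReal.ofReal_prod_of_nonneg (fun i _ => (hPpos _).le)]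
      congr 1
      rw [Finset.prod_range (fun i => P (w v i))]
      refine Finset.prod_congr rfl (fun i _ => ?_)
      congr 1
      rw [hw]
      simp [i.isLt]
    rw [Finset.sum_congr rfl (fun v _ => hAv v)]
    rw [← ENNReal.ofReal_sum_of_nonneg
      (fun v _ => Finset.prod_nonneg (fun i _ => (hPpos _).le))]
    rw [ENNReal.toReal_ofReal
      (Finset.sum_nonneg (fun v _ => Finset.prod_nonneg (fun i _ => (hPpos _).le)))]
  -- main limit argument
  rw [Metric.tendsto_atTop]
  intro ε hε
  have hQex : ∃ r ∈ E, r < I + ε/4 := by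
    by_contra h
    push_neg at h
    have := le_csInf hEne h
    linarith
  obtain ⟨r0, hr0E, hr0⟩ := hQex
  obtain ⟨Q, hq0, hq1, hqtv, hqD⟩ := hr0E
  obtain ⟨N1, hN1pos, hlow⟩ := sanov_lower P hPpos a Q hq0 hq1 hqtv (ε/4) (by positivity)
  -- the log(n+1)/n bound
  set c : ℝ := ε/(8*((k:ℝ)+1)) with hcdef
  have hc : 0 < c := by positivity
  have hlog0 : Tendsto (fun x : ℝ => Real.log x / x) atTop (nhds 0) :=
    Real.isLittleO_log_id_atTop.tendsto_div_nhds_zero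
  have hcast : Tendsto (fun n : ℕ => (n:ℝ)+1) atTop atTop :=
    Filter.tendsto_atTop_add_const_right atTop 1 tendsto_natCast_atTop_atTop
  have hlog : Tendsto (fun n : ℕ => Real.log ((n:ℝ)+1) / ((n:ℝ)+1)) atTop (nhds 0) :=
    hlog0.comp hcast
  have hlog2 : ∀ᶠ n : ℕ in atTop, Real.log ((n:ℝ)+1) / ((n:ℝ)+1) < c := by
    have := hlog.eventually (eventually_lt_nhds hc)
    exact this
  obtain ⟨N2, hN2⟩ := eventually_atTop.mp hlog2
  set N := max (max N1 N2) 1 with hNdef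
  refine ⟨N, fun n hn => ?_⟩
  have hnN1 : N1 ≤ n := le_trans (le_trans (le_max_left _ _) (le_max_left _ _)) hn
  have hnN2 : N2 ≤ n := le_trans (le_trans (le_max_right _ _) (le_max_left _ _)) hn
  have hn1 : 1 ≤ n := le_trans (le_max_right _ _) hn
  have hnR : (0:ℝ) < n := by exact_mod_cast hn1
  -- lower bound on p n
  have hplow : Real.exp ((n:ℝ) * (-(klDivergence Q P) - ε/4)) ≤ p n :=
    hlow n hnN1 (Sn n)
      (fun v hv => Finset.mem_filter.mpr ⟨Finset.mem_univ v, hv⟩)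
  have hppos : 0 < p n := lt_of_lt_of_le (Real.exp_pos _) hplow
  -- upper bound on p n
  have hpupp : p n ≤ ((n:ℝ)+1)^k * Real.exp (-((n:ℝ) * I)) :=
    sanov_upper P hPpos a I hIle hn1 (Sn n)
      (fun v hv => (Finset.mem_filter.mp hv).2)
  -- logs
  have hloglow : (n:ℝ) * (-(klDivergence Q P) - ε/4) ≤ Real.log (p n) :=
    (Real.le_log_iff_exp_le hppos).mpr hplow
  have hlogupp : Real.log (p n) ≤ (k:ℝ) * Real.log ((n:ℝ)+1) - (n:ℝ)*I := by
    calc Real.log (p n) ≤ Real.log (((n:ℝ)+1)^k * Real.exp (-((n:ℝ) * I))) :=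
          Real.log_le_log hppos hpupp
      _ = (k:ℝ) * Real.log ((n:ℝ)+1) - (n:ℝ)*I := by
          rw [Real.log_mul (by positivity) (Real.exp_ne_zero _), Real.log_pow,
            Real.log_exp]
          push_cast
          ring
  -- the log(n+1) term is small
  have hsmall : (k:ℝ) * Real.log ((n:ℝ)+1) / n < ε/2 := by
    have ht := hN2 n hnN2
    set t : ℝ := Real.log ((n:ℝ)+1) / ((n:ℝ)+1) with htdef
    have ht0 : 0 ≤ t := by
      apply div_nonneg _ (by positivity)
      apply Real.log_nonneg
      linarith
    have hlogn1 : Real.log ((n:ℝ)+1) = t * ((n:ℝ)+1) := by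
      rw [htdef]
      field_simp
    rw [div_lt_iff₀ hnR, hlogn1]
    have hkR : (1:ℝ) ≤ k := by exact_mod_cast hk1
    have hn1R : (1:ℝ) ≤ n := by exact_mod_cast hn1
    have hεc : ε = c * (8*((k:ℝ)+1)) := by
      rw [hcdef]
      field_simp
    nlinarith [mul_lt_mul_of_pos_left ht (show (0:ℝ) < 2*(k:ℝ)*n by positivity),
      mul_le_mul_of_nonneg_left (show (n:ℝ)+1 ≤ 2*n by linarith)
        (mul_nonneg (by positivity : (0:ℝ) ≤ (k:ℝ)) ht0),
      mul_pos hc hnR]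
  -- conclude
  have hgoal : dist ((1 / (n:ℝ)) * Real.log (p n)) (-I) < ε := by
    rw [Real.dist_eq, abs_lt]
    constructor
    · -- -ε < f + I
      have h1 : (1/(n:ℝ)) * Real.log (p n) ≥ (1/(n:ℝ)) * ((n:ℝ) * (-(klDivergence Q P) - ε/4)) :=
        mul_le_mul_of_nonneg_left hloglow (by positivity)
      have h2 : (1/(n:ℝ)) * ((n:ℝ) * (-(klDivergence Q P) - ε/4))
          = -(klDivergence Q P) - ε/4 := by field_simp
      have h3 : klDivergence Q P < I + ε/4 := by rw [← hqD]; exact hr0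
      linarith
    · -- f + I < ε
      have h1 : (1/(n:ℝ)) * Real.log (p n)
          ≤ (1/(n:ℝ)) * ((k:ℝ) * Real.log ((n:ℝ)+1) - (n:ℝ)*I) :=
        mul_le_mul_of_nonneg_left hlogupp (by positivity)
      have h2 : (1/(n:ℝ)) * ((k:ℝ) * Real.log ((n:ℝ)+1) - (n:ℝ)*I)
          = (k:ℝ) * Real.log ((n:ℝ)+1) / n - I := by field_simp
      linarith
  rw [← hmeasure n] at hgoal
  exact hgoal
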